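/- Let z be a nonzero real number, let a be a real number that is not a nonpositive integer, and let d ≥ 1 be an integer. If c is a real number and there exists a polynomial q with real coefficients such that for every integer n ≥ 0, ∑_{k=0}^{n−1} (k^d − c)·z^k·a^{(k)} = q(n)·z^n·a^{(n)} − q(0), then c equals the d-th iterated derivative at 0 of g_{a,z}(x) = exp(1/z − a·x − (1/z)·e^{−x}). -/

import Mathlib

/-- Rising factorial `a^{(k)} = a (a+1) ⋯ (a+k-1)` of a real number. -/
def risingFactorial (a : ℝ) : ℕ → ℝ
  | 0 => 1
  | k + 1 => risingFactorial a k * (a + k)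

open Polynomial

namespace Stmt13Aux

noncomputable def g (z a : ℝ) : ℝ → ℝ :=
  fun x : ℝ => Real.exp (1 / z - a * x - (1 / z) * Real.exp (-x))

lemma g_contDiff (z a : ℝ) : ContDiff ℝ ⊤ (g z a) := by
  unfold g; fun_prop

lemma iter_diff (z a : ℝ) (j : ℕ) : Differentiable ℝ (iteratedDeriv j (g z a)) :=
  (g_contDiff z a).differentiable_iteratedDeriv j (by simp)

/-- `Φ p x = Σ_j p_j g^{(j)}(x)`, i.e. `p(D) g` evaluated at `x`. -/
noncomputable def Φ (z a : ℝ) (p : ℝ[X]) (x : ℝ) : ℝ :=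
  p.sum fun j cj => cj * iteratedDeriv j (g z a) x

lemma Φ_add (z a : ℝ) (p q : ℝ[X]) (x : ℝ) :
    Φ z a (p + q) x = Φ z a p x + Φ z a q x :=
  Polynomial.sum_add_index p q _ (by intro i; ring) (by intro i b₁ b₂; ring)

lemma Φ_monomial (z a : ℝ) (n : ℕ) (b : ℝ) (x : ℝ) :
    Φ z a (monomial n b) x = b * iteratedDeriv n (g z a) x :=
  Polynomial.sum_monomial_index b _ (by ring)

lemma Φ_zero (z a : ℝ) (x : ℝ) : Φ z a 0 x = 0 := by
  simp [Φ]

lemma Φ_sub (z a : ℝ) (p q : ℝ[X]) (x : ℝ) :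
    Φ z a (p - q) x = Φ z a p x - Φ z a q x := by
  have h := Φ_add z a (p - q) q x
  rw [sub_add_cancel] at h
  linarith

lemma Φ_C_mul (z a : ℝ) (b : ℝ) (p : ℝ[X]) (x : ℝ) :
    Φ z a (C b * p) x = b * Φ z a p x := by
  induction p using Polynomial.induction_on' with
  | add p q hp hq => rw [mul_add, Φ_add, Φ_add, hp, hq, mul_add]
  | monomial n r => rw [C_mul_monomial, Φ_monomial, Φ_monomial]; ring

lemma Φ_finset_sum (z a : ℝ) {ι : Type*} (s : Finset ι) (f : ι → ℝ[X]) (x : ℝ) :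
    Φ z a (∑ i ∈ s, f i) x = ∑ i ∈ s, Φ z a (f i) x := by
  classical
  induction s using Finset.induction_on with
  | empty => simp [Φ_zero]
  | insert i s hi ih =>
    rw [Finset.sum_insert hi, Finset.sum_insert hi, Φ_add, ih]

lemma Φ_diff (z a : ℝ) (p : ℝ[X]) : Differentiable ℝ (fun y => Φ z a p y) := by
  have h : (fun y => Φ z a p y)
      = fun y => ∑ n ∈ p.support, p.coeff n * iteratedDeriv n (g z a) y := by
    funext y; rw [Φ, Polynomial.sum_def]
  rw [h]
  exact Differentiable.fun_sum fun i _ => (iter_diff z a i).const_mul _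

lemma Φ_mul_X (z a : ℝ) (p : ℝ[X]) (x : ℝ) :
    Φ z a (p * X) x = p.sum fun j cj => cj * iteratedDeriv (j + 1) (g z a) x := by
  have h : p * X = ∑ n ∈ p.support, monomial (n + 1) (p.coeff n) := by
    conv_lhs => rw [← Polynomial.sum_monomial_eq p]
    rw [Polynomial.sum_def, Finset.sum_mul]
    simp [Polynomial.monomial_mul_X]
  rw [h, Φ_finset_sum, Polynomial.sum_def]
  exact Finset.sum_congr rfl fun n _ => Φ_monomial z a (n + 1) (p.coeff n) x

lemma deriv_Φ (z a : ℝ) (p : ℝ[X]) (x : ℝ) :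
    deriv (fun y => Φ z a p y) x = Φ z a (p * X) x := by
  have h : (fun y => Φ z a p y)
      = fun y => ∑ n ∈ p.support, p.coeff n * iteratedDeriv n (g z a) y := by
    funext y; rw [Φ, Polynomial.sum_def]
  rw [h, deriv_fun_sum (fun i _ => ((iter_diff z a i) x).const_mul _), Φ_mul_X,
    Polynomial.sum_def]
  refine Finset.sum_congr rfl fun n _ => ?_
  rw [deriv_const_mul _ ((iter_diff z a n) x), ← iteratedDeriv_succ]

lemma iter_Φ (z a : ℝ) (p : ℝ[X]) (k : ℕ) :
    iteratedDeriv k (fun x => Φ z a p x) = fun x => Φ z a (p * X ^ k) x := by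
  induction k with
  | zero => funext x; simp
  | succ k ih =>
    rw [iteratedDeriv_succ, ih]
    funext x
    rw [deriv_Φ, mul_assoc, ← pow_succ]

lemma g_hasDeriv (z a : ℝ) (x : ℝ) :
    HasDerivAt (g z a) ((-a + (1 / z) * Real.exp (-x)) * g z a x) x := by
  have hx : HasDerivAt (fun y : ℝ => -y) (-1) x := (hasDerivAt_id x).neg
  have he : HasDerivAt (fun y : ℝ => Real.exp (-y)) (Real.exp (-x) * (-1)) x := hx.exp
  have hlin : HasDerivAt (fun y : ℝ => 1 / z - a * y) (-a) x := by
    simpa using ((hasDerivAt_id x).const_mul a).const_sub (1 / z)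
  have hu : HasDerivAt (fun y : ℝ => 1 / z - a * y - (1 / z) * Real.exp (-y))
      (-a + (1 / z) * Real.exp (-x)) x := by
    have := hlin.fun_sub (he.const_mul (1 / z))
    convert this using 1
    · rfl
    · rfl
    · ring
  have := hu.exp
  convert this using 1
  · rfl
  simp only [g]
  ring

lemma rel (z a : ℝ) (hz : z ≠ 0) (x : ℝ) :
    Real.exp (-x) * g z a x = z * (deriv (g z a) x + a * g z a x) := by
  rw [(g_hasDeriv z a x).deriv]
  field_simp
  ring

lemma iter_psi (z a : ℝ) (k : ℕ) :
    iteratedDeriv k (fun x => Real.exp (-x) * g z a x)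
      = fun x => Real.exp (-x) * Φ z a ((X - 1) ^ k) x := by
  induction k with
  | zero =>
    funext x
    rw [iteratedDeriv_zero, pow_zero,
      show (1 : ℝ[X]) = monomial 0 1 from (Polynomial.monomial_zero_one).symm, Φ_monomial]
    simp
  | succ k ih =>
    rw [iteratedDeriv_succ, ih]
    funext x
    have hd1 : HasDerivAt (fun y : ℝ => Real.exp (-y)) (-Real.exp (-x)) x := by
      simpa using ((hasDerivAt_id x).neg).exp
    have hd2 : HasDerivAt (fun y => Φ z a ((X - 1) ^ k) y)
        (deriv (fun y => Φ z a ((X - 1) ^ k) y) x) x :=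
      ((Φ_diff z a ((X - 1) ^ k)) x).hasDerivAt
    have hmul := (hd1.fun_mul hd2).deriv
    rw [hmul, deriv_Φ]
    have hpoly : (X - 1 : ℝ[X]) ^ (k + 1) = (X - 1) ^ k * X - (X - 1) ^ k := by ring
    rw [hpoly, Φ_sub]
    ring

lemma core (z a : ℝ) (hz : z ≠ 0) (k : ℕ) :
    z * (iteratedDeriv (k + 1) (g z a) 0 + a * iteratedDeriv k (g z a) 0)
      = Φ z a ((X - 1) ^ k) 0 := by
  have e1 : (fun x => Real.exp (-x) * g z a x)
      = fun x => Φ z a (monomial 1 z + monomial 0 (z * a)) x := by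
    funext x
    rw [Φ_add, Φ_monomial, Φ_monomial, iteratedDeriv_one, iteratedDeriv_zero, rel z a hz x]
    ring
  have e2 := congrFun (iter_psi z a k) 0
  rw [e1, congrFun (iter_Φ z a (monomial 1 z + monomial 0 (z * a)) k) 0] at e2
  have e3 : (monomial 1 z + monomial 0 (z * a) : ℝ[X]) * X ^ k
      = monomial (1 + k) z + monomial k (z * a) := by
    rw [add_mul, X_pow_eq_monomial, Polynomial.monomial_mul_monomial,
      Polynomial.monomial_mul_monomial]
    simp
  rw [e3, Φ_add, Φ_monomial, Φ_monomial] at e2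
  simp only [neg_zero, Real.exp_zero, one_mul] at e2
  rw [show 1 + k = k + 1 by omega] at e2
  linear_combination e2

lemma key (z a : ℝ) (hz : z ≠ 0) (p : ℝ[X]) :
    Φ z a (C z * (X + C a) * p) 0 = Φ z a (p.comp (X - 1)) 0 := by
  induction p using Polynomial.induction_on' with
  | add p q hp hq => rw [mul_add, Φ_add, Polynomial.add_comp, Φ_add, hp, hq]
  | monomial n b =>
    have e : C z * (X + C a) * monomial n b
        = C (z * b) * X ^ (n + 1) + C (z * (a * b)) * X ^ n := by
      rw [← C_mul_X_pow_eq_monomial]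
      simp only [map_mul]
      ring
    have e2 : (monomial n b).comp (X - 1) = C b * (X - 1) ^ n := by
      rw [← C_mul_X_pow_eq_monomial, Polynomial.mul_comp, Polynomial.C_comp,
        Polynomial.pow_comp, Polynomial.X_comp]
    rw [e, Φ_add, C_mul_X_pow_eq_monomial, C_mul_X_pow_eq_monomial, Φ_monomial, Φ_monomial,
      e2, Φ_C_mul, ← core z a hz n]
    ring

end Stmt13Aux

theorem stmt_13 (z a : ℝ) (hz : z ≠ 0) (ha : ∀ m : ℕ, a ≠ -(m : ℝ)) (d : ℕ) (hd : 1 ≤ d)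
    (c : ℝ)
    (h : ∃ q : Polynomial ℝ, ∀ n : ℕ,
      ∑ k ∈ Finset.range n, (((k : ℝ) ^ d - c) * z ^ k * risingFactorial a k) =
        q.eval (n : ℝ) * z ^ n * risingFactorial a n - q.eval 0) :
    c = iteratedDeriv d (fun x : ℝ => Real.exp (1 / z - a * x - (1 / z) * Real.exp (-x))) 0 := by
  obtain ⟨q, hq⟩ := h
  open Stmt13Aux in
  show c = iteratedDeriv d (Stmt13Aux.g z a) 0
  have hrf : ∀ n : ℕ, risingFactorial a n ≠ 0 := by
    intro n
    induction n with
    | zero => simp [risingFactorial]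
    | succ k ih =>
      have hk : a + (k : ℝ) ≠ 0 := by
        intro hk0
        exact ha k (by linarith)
      simpa [risingFactorial] using mul_ne_zero ih hk
  have step : ∀ n : ℕ, z * (a + (n : ℝ)) * q.eval ((n : ℝ) + 1) - q.eval (n : ℝ)
      = (n : ℝ) ^ d - c := by
    intro n
    have h1 := hq n
    have h2 := hq (n + 1)
    rw [Finset.sum_range_succ] at h2
    have h3 : ((n : ℝ) ^ d - c) * z ^ n * risingFactorial a n
        = q.eval ((n : ℝ) + 1) * z ^ (n + 1) * risingFactorial a (n + 1)
          - q.eval (n : ℝ) * z ^ n * risingFactorial a n := by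
      push_cast at h2
      linarith [h1, h2]
    have h4 : ((n : ℝ) ^ d - c) * (z ^ n * risingFactorial a n)
        = (z * (a + (n : ℝ)) * q.eval ((n : ℝ) + 1) - q.eval (n : ℝ))
          * (z ^ n * risingFactorial a n) := by
      have hrec : risingFactorial a (n + 1) = risingFactorial a n * (a + (n : ℝ)) := rfl
      rw [hrec, pow_succ] at h3
      ring_nf at h3 ⊢
      linarith
    exact (mul_right_cancel₀ (mul_ne_zero (pow_ne_zero n hz) (hrf n)) h4).symm
  -- the polynomial identity
  have hPoly : Polynomial.C z * (Polynomial.X + Polynomial.C a) * (q.comp (Polynomial.X + 1))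
      - q = Polynomial.X ^ d - Polynomial.C c := by
    have hP : (Polynomial.C z * (Polynomial.X + Polynomial.C a) * (q.comp (Polynomial.X + 1))
        - q - (Polynomial.X ^ d - Polynomial.C c)) = 0 := by
      apply Polynomial.eq_zero_of_infinite_isRoot
      apply Set.infinite_of_injective_forall_mem (f := fun n : ℕ => (n : ℝ))
        Nat.cast_injective
      intro n
      simp only [Set.mem_setOf_eq, Polynomial.IsRoot, Polynomial.eval_sub, Polynomial.eval_mul,
        Polynomial.eval_add, Polynomial.eval_pow, Polynomial.eval_comp, Polynomial.eval_X,
        Polynomial.eval_C, Polynomial.eval_one]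
      linear_combination step n
    linear_combination hP
  have hkey := Stmt13Aux.key z a hz (q.comp (Polynomial.X + 1))
  have hcomp : ((q.comp (Polynomial.X + 1)).comp (Polynomial.X - 1)) = q := by
    rw [Polynomial.comp_assoc]
    simp [Polynomial.add_comp]
  rw [hcomp] at hkey
  have hzero : Stmt13Aux.Φ z a (Polynomial.X ^ d - Polynomial.C c) 0 = 0 := by
    rw [← hPoly, Stmt13Aux.Φ_sub]
    rw [hkey]
    ring
  rw [Stmt13Aux.Φ_sub] at hzero
  have hXd : Stmt13Aux.Φ z a (Polynomial.X ^ d) 0 = iteratedDeriv d (Stmt13Aux.g z a) 0 := by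
    rw [Polynomial.X_pow_eq_monomial, Stmt13Aux.Φ_monomial]
    ring
  have hC : Stmt13Aux.Φ z a (Polynomial.C c) 0 = c * Stmt13Aux.g z a 0 := by
    rw [← Polynomial.monomial_zero_left, Stmt13Aux.Φ_monomial, iteratedDeriv_zero]
  have hg0 : Stmt13Aux.g z a 0 = 1 := by
    have : 1 / z - a * 0 - 1 / z * Real.exp (-(0 : ℝ)) = 0 := by
      rw [neg_zero, Real.exp_zero]; ring
    simp only [Stmt13Aux.g, this, Real.exp_zero]
  rw [hXd, hC, hg0] at hzero
  linarith
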